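/- Under the setting of the Gibbs measures ρ̃_u with density proportional to exp(−λ(A + uH)) relative to π, suppose π({θ : H(θ) < B}) > 0 for a given B ∈ ℝ. Then there exists a unique ū ≥ 0 such that ρ̃_{ū} minimizes ∫ A dρ + (1/λ) KL(ρ‖π) over all probability measures ρ ≪ π satisfying ∫ H dρ ≤ B; moreover ū = 0 if Λ(0) ≤ B, and otherwise ū > 0 is the unique positive number with Λ(ū) = B, where Λ(u) = ∫ H dρ̃_u. -/

import Mathlib

open MeasureTheory

/-- Kullback–Leibler divergence `∫ log(dρ/dπ) dρ` (real-valued version). -/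
noncomputable def klDiv {Θ : Type*} [MeasurableSpace Θ] (ρ π : Measure Θ) : ℝ :=
  ∫ θ, Real.log ((ρ.rnDeriv π θ).toReal) ∂ρ

/-- The Gibbs measure with density proportional to `exp (-lam * (A θ + u * H θ))`
with respect to `prior`. -/
noncomputable def gibbsMeasure {Θ : Type*} [MeasurableSpace Θ] (prior : Measure Θ)
    (lam : ℝ) (A H : Θ → ℝ) (u : ℝ) : Measure Θ :=
  prior.tilted fun θ => -(lam * (A θ + u * H θ))

/-- `Λ(u) = ∫ H dρ̃_u`. -/
noncomputable def LambdaFn {Θ : Type*} [MeasurableSpace Θ] (prior : Measure Θ)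
    (lam : ℝ) (A H : Θ → ℝ) (u : ℝ) : ℝ :=
  ∫ θ, H θ ∂(gibbsMeasure prior lam A H u)

set_option linter.unusedSectionVars false

open MeasureTheory Real


namespace Stmt4Helper

variable {Θ : Type*} [MeasurableSpace Θ]

lemma integrable_of_abs_le (pr : Measure Θ) [IsFiniteMeasure pr] {f : Θ → ℝ}
    (hf : AEStronglyMeasurable f pr) {C : ℝ} (h : ∀ θ, |f θ| ≤ C) : Integrable f pr :=
  (integrable_const C).mono' hf (Filter.Eventually.of_forall fun θ => by
    simpa [Real.norm_eq_abs] using h θ)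

variable (lam : ℝ) (A H : Θ → ℝ)

/-- the exponent of the Gibbs density -/
def gf (u : ℝ) (θ : Θ) : ℝ := -(lam * (A θ + u * H θ))

variable {lam A H}
variable {CA CH : ℝ}

section basic
variable (hlam : 0 < lam) (hA : Measurable A) (hH : Measurable H)
  (hAbd : ∀ θ, |A θ| ≤ CA) (hHbd : ∀ θ, |H θ| ≤ CH)

include hA hH in
lemma gf_meas (u : ℝ) : Measurable (gf lam A H u) := by
  unfold gf
  rw [show (fun θ => -(lam * (A θ + u * H θ))) = fun θ => -(lam * (A θ + H θ * u)) by funext θ; ring]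
  exact (((hA.add (hH.mul_const u)).const_mul lam)).neg

include hlam hAbd hHbd in
lemma gf_abs_le (u : ℝ) (θ : Θ) : |gf lam A H u θ| ≤ lam * (CA + |u| * CH) := by
  unfold gf
  rw [abs_neg, abs_mul, abs_of_pos hlam]
  refine mul_le_mul_of_nonneg_left ?_ hlam.le
  calc |A θ + u * H θ| ≤ |A θ| + |u * H θ| := abs_add_le _ _
    _ ≤ CA + |u| * CH := by
        rw [abs_mul]
        exact add_le_add (hAbd θ) (mul_le_mul_of_nonneg_left (hHbd θ) (abs_nonneg u))

include hlam hA hH hAbd hHbd in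
lemma integrable_exp_gf_mul (pr : Measure Θ) [IsFiniteMeasure pr] (u : ℝ) {φ : Θ → ℝ}
    (hφ : Measurable φ) {Cφ : ℝ} (hφb : ∀ θ, |φ θ| ≤ Cφ) :
    Integrable (fun θ => exp (gf lam A H u θ) * φ θ) pr := by
  refine integrable_of_abs_le pr ?_ (C := exp (lam * (CA + |u| * CH)) * Cφ) fun θ => ?_
  · exact ((measurable_exp.comp (gf_meas hA hH u)).mul hφ).aestronglyMeasurable
  · rw [abs_mul, abs_exp]
    exact mul_le_mul (exp_le_exp.mpr ((le_abs_self _).trans (gf_abs_le hlam hAbd hHbd u θ)))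
      (hφb θ) (abs_nonneg _) (exp_pos _).le

include hlam hA hH hAbd hHbd in
lemma integrable_exp_gf (pr : Measure Θ) [IsFiniteMeasure pr] (u : ℝ) :
    Integrable (fun θ => exp (gf lam A H u θ)) pr := by
  have := integrable_exp_gf_mul hlam hA hH hAbd hHbd pr u (φ := fun _ => (1:ℝ))
    measurable_const (Cφ := 1) (fun _ => by norm_num)
  simpa using this

end basic

section gibbs

variable {pr : Measure Θ} [IsProbabilityMeasure pr]
variable (hlam : 0 < lam) (hA : Measurable A) (hH : Measurable H)
  (hAbd : ∀ θ, |A θ| ≤ CA) (hHbd : ∀ θ, |H θ| ≤ CH)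

lemma gibbs_eq (u : ℝ) : gibbsMeasure pr lam A H u = pr.tilted (gf lam A H u) := rfl

include hlam hA hH hAbd hHbd

lemma Z_pos (u : ℝ) : 0 < ∫ θ, exp (gf lam A H u θ) ∂pr :=
  integral_exp_pos (integrable_exp_gf hlam hA hH hAbd hHbd pr u)

lemma gibbs_prob (u : ℝ) : IsProbabilityMeasure (gibbsMeasure pr lam A H u) := by
  rw [gibbs_eq]
  exact isProbabilityMeasure_tilted (integrable_exp_gf hlam hA hH hAbd hHbd pr u)

lemma integral_gibbs (u : ℝ) (φ : Θ → ℝ) :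
    ∫ θ, φ θ ∂(gibbsMeasure pr lam A H u)
      = (∫ θ, exp (gf lam A H u θ) * φ θ ∂pr) / ∫ θ, exp (gf lam A H u θ) ∂pr := by
  rw [gibbs_eq, integral_tilted]
  simp_rw [smul_eq_mul, div_mul_eq_mul_div]
  rw [integral_div]

lemma LambdaFn_eq (u : ℝ) :
    LambdaFn pr lam A H u
      = (∫ θ, exp (gf lam A H u θ) * H θ ∂pr) / ∫ θ, exp (gf lam A H u θ) ∂pr :=
  integral_gibbs hlam hA hH hAbd hHbd u H

lemma klDiv_gibbs (u : ℝ) :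
    klDiv (gibbsMeasure pr lam A H u) pr
      = ∫ θ, gf lam A H u θ ∂(gibbsMeasure pr lam A H u)
          - log (∫ θ, exp (gf lam A H u θ) ∂pr) := by
  have hint := integrable_exp_gf hlam hA hH hAbd hHbd pr u
  have h1 : (fun θ => log (((pr.tilted (gf lam A H u)).rnDeriv pr θ).toReal))
      =ᵐ[pr] fun θ => gf lam A H u θ - log (∫ θ, exp (gf lam A H u θ) ∂pr) :=
    log_rnDeriv_tilted_left_self hint
  have h2 := (tilted_absolutelyContinuous pr (gf lam A H u)).ae_le h1
  have hprob := gibbs_prob hlam hA hH hAbd hHbd (pr := pr) u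
  rw [klDiv, gibbs_eq, integral_congr_ae h2, integral_sub ?_ (integrable_const _),
    integral_const]
  · have h3 : (pr.tilted (gf lam A H u)) Set.univ = 1 := hprob.measure_univ
    rw [measureReal_def, h3]; simp
  · exact integrable_of_abs_le _ ((gf_meas hA hH u).aestronglyMeasurable)
      (gf_abs_le hlam hAbd hHbd u)

end gibbs

section variational

variable {pr : Measure Θ} [IsProbabilityMeasure pr]
variable (hlam : 0 < lam) (hA : Measurable A) (hH : Measurable H)
  (hAbd : ∀ θ, |A θ| ≤ CA) (hHbd : ∀ θ, |H θ| ≤ CH)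

include hlam hA hH hAbd hHbd

lemma integral_gf_gibbs (u : ℝ) :
    ∫ θ, gf lam A H u θ ∂(gibbsMeasure pr lam A H u)
      = -(lam * ((∫ θ, A θ ∂(gibbsMeasure pr lam A H u)) + u * LambdaFn pr lam A H u)) := by
  have hprob := gibbs_prob hlam hA hH hAbd hHbd (pr := pr) u
  have hiA : Integrable A (gibbsMeasure pr lam A H u) :=
    integrable_of_abs_le _ hA.aestronglyMeasurable hAbd
  have hiH : Integrable H (gibbsMeasure pr lam A H u) :=
    integrable_of_abs_le _ hH.aestronglyMeasurable hHbd
  have : LambdaFn pr lam A H u = ∫ θ, H θ ∂(gibbsMeasure pr lam A H u) := rfl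
  rw [this]
  unfold gf
  rw [integral_neg, integral_const_mul, integral_add hiA (hiH.const_mul u),
    integral_const_mul]

lemma gibbs_objective (u : ℝ) :
    (∫ θ, A θ ∂(gibbsMeasure pr lam A H u)) + u * LambdaFn pr lam A H u
      + (1/lam) * klDiv (gibbsMeasure pr lam A H u) pr
    = -(1/lam) * log (∫ θ, exp (gf lam A H u θ) ∂pr) := by
  rw [klDiv_gibbs hlam hA hH hAbd hHbd, integral_gf_gibbs hlam hA hH hAbd hHbd]
  field_simp
  ring

omit hlam hA hH hAbd hHbd in
lemma sub_le_mul_log_sub {x y : ℝ} (hx : 0 ≤ x) (hy : 0 < y) :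
    x - y ≤ x * (Real.log x - Real.log y) := by
  rcases eq_or_lt_of_le hx with h|h
  · rw [← h]; simp; linarith
  · have h1 : Real.log (y/x) ≤ y/x - 1 := Real.log_le_sub_one_of_pos (div_pos hy h)
    rw [Real.log_div hy.ne' h.ne'] at h1
    have h2 := mul_le_mul_of_nonneg_left h1 h.le
    have h3 : x * (y / x) = y := by field_simp
    nlinarith

lemma variational_lower_bound (u : ℝ) (ρ : Measure Θ) (hρ : IsProbabilityMeasure ρ)
    (hac : ρ ≪ pr) (hint : Integrable (fun θ => log ((ρ.rnDeriv pr θ).toReal)) ρ) :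
    -(1/lam) * log (∫ θ, exp (gf lam A H u θ) ∂pr)
      ≤ (∫ θ, A θ ∂ρ) + u * (∫ θ, H θ ∂ρ) + (1/lam) * klDiv ρ pr := by
  set F : Θ → ℝ := fun θ => A θ + u * H θ with hFdef
  have hF_meas : Measurable F := by
    have : F = fun θ => A θ + H θ * u := by funext θ; simp [hFdef]; ring
    rw [this]; exact hA.add (hH.mul_const u)
  have hFbd : ∀ θ, |F θ| ≤ CA + |u| * CH := fun θ => by
    calc |F θ| ≤ |A θ| + |u * H θ| := abs_add_le _ _
      _ ≤ CA + |u| * CH := by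
          rw [abs_mul]
          exact add_le_add (hAbd θ) (mul_le_mul_of_nonneg_left (hHbd θ) (abs_nonneg u))
  have hgfF : ∀ θ, gf lam A H u θ = -(lam * F θ) := fun θ => rfl
  set Z : ℝ := ∫ θ, exp (gf lam A H u θ) ∂pr with hZdef
  have hZ : 0 < Z := Z_pos hlam hA hH hAbd hHbd u
  set r : Θ → ℝ := fun θ => (ρ.rnDeriv pr θ).toReal with hrdef
  have hr_meas : Measurable r := (Measure.measurable_rnDeriv ρ pr).ennreal_toReal
  have hr_nonneg : ∀ θ, 0 ≤ r θ := fun θ => ENNReal.toReal_nonneg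
  have hr_int : Integrable r pr := Measure.integrable_toReal_rnDeriv
  have hr_one : ∫ θ, r θ ∂pr = 1 := by
    rw [hrdef]
    rw [Measure.integral_toReal_rnDeriv hac, measureReal_def, hρ.measure_univ, ENNReal.toReal_one]
  set w : Θ → ℝ := fun θ => exp (gf lam A H u θ) / Z with hwdef
  have hw_pos : ∀ θ, 0 < w θ := fun θ => div_pos (exp_pos _) hZ
  have hw_int : Integrable w pr := (integrable_exp_gf hlam hA hH hAbd hHbd pr u).div_const Z
  have hw_one : ∫ θ, w θ ∂pr = 1 := by rw [hwdef]; simp only; rw [integral_div, div_self hZ.ne']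
  have hlogw : ∀ θ, log (w θ) = -(lam * F θ) - log Z := fun θ => by
    rw [hwdef]; simp only
    rw [log_div (exp_pos _).ne' hZ.ne', log_exp, hgfF]
  -- transfer integrals from ρ to pr
  have hKL : klDiv ρ pr = ∫ θ, r θ * log (r θ) ∂pr := by
    rw [klDiv, ← integral_rnDeriv_smul hac (f := fun θ => log (r θ))]
    simp_rw [smul_eq_mul]
    rfl
  have hFtrans : ∫ θ, F θ ∂ρ = ∫ θ, r θ * F θ ∂pr := by
    rw [← integral_rnDeriv_smul hac (f := F)]
    simp_rw [smul_eq_mul]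
    rfl
  -- integrability
  have hint1 : Integrable (fun θ => r θ * log (r θ)) pr := by
    have := (integrable_rnDeriv_smul_iff hac
      (f := fun θ => log ((ρ.rnDeriv pr θ).toReal))).mpr hint
    simpa [smul_eq_mul] using this
  have hint2 : Integrable (fun θ => r θ * log (w θ)) pr := by
    have h2' := hr_int.bdd_mul
      ((hF_meas.const_mul lam).neg.sub_const (log Z)).aestronglyMeasurable
      (c := lam * (CA + |u| * CH) + |log Z|) (Filter.Eventually.of_forall fun θ => by
        rw [Real.norm_eq_abs]
        calc |-(lam * F θ) - log Z| ≤ |(-(lam * F θ))| + |log Z| := abs_sub _ _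
          _ ≤ lam * (CA + |u| * CH) + |log Z| := by
              rw [abs_neg, abs_mul, abs_of_pos hlam]
              exact add_le_add (mul_le_mul_of_nonneg_left (hFbd θ) hlam.le) le_rfl)
    refine h2'.congr (Filter.Eventually.of_forall fun θ => ?_)
    simp only [hlogw, Pi.neg_apply]
    ring
  have hintrF : Integrable (fun θ => r θ * F θ) pr := by
    have h2' := hr_int.bdd_mul hF_meas.aestronglyMeasurable
      (c := CA + |u| * CH) (Filter.Eventually.of_forall fun θ => by rw [Real.norm_eq_abs]; exact hFbd θ)
    refine h2'.congr (Filter.Eventually.of_forall fun θ => by ring)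
  -- the key inequality
  have key : ∫ θ, (r θ - w θ) ∂pr ≤ ∫ θ, (r θ * (log (r θ) - log (w θ))) ∂pr := by
    refine integral_mono (hr_int.sub hw_int) ?_
      (fun θ => sub_le_mul_log_sub (hr_nonneg θ) (hw_pos θ))
    have hsub : Integrable (fun θ => r θ * log (r θ) - r θ * log (w θ)) pr :=
      hint1.sub hint2
    refine hsub.congr (Filter.Eventually.of_forall fun θ => by ring)
  have hlhs : ∫ θ, (r θ - w θ) ∂pr = 0 := by
    rw [integral_sub hr_int hw_int, hr_one, hw_one, sub_self]
  have hrhs : ∫ θ, (r θ * (log (r θ) - log (w θ))) ∂pr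
      = (∫ θ, r θ * log (r θ) ∂pr) + lam * (∫ θ, r θ * F θ ∂pr) + log Z := by
    have e1 : (fun θ => r θ * (log (r θ) - log (w θ)))
        = fun θ => r θ * log (r θ) - (-(lam * (r θ * F θ)) - log Z * r θ) := by
      funext θ; rw [hlogw θ]; ring
    have iNeg : Integrable (fun θ => -(lam * (r θ * F θ))) pr := by
      exact (hintrF.const_mul lam).neg
    have iLog : Integrable (fun θ => log Z * r θ) pr := hr_int.const_mul (log Z)
    have iSub : Integrable (fun θ => -(lam * (r θ * F θ)) - log Z * r θ) pr := iNeg.sub iLog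
    rw [e1, integral_sub hint1 iSub, integral_sub iNeg iLog, integral_neg, integral_const_mul,
      integral_const_mul, hr_one]
    ring
  have hineq : 0 ≤ (∫ θ, r θ * log (r θ) ∂pr) + lam * (∫ θ, r θ * F θ ∂pr) + log Z := by
    rw [← hrhs, ← hlhs]; exact key
  -- convert back
  have hiAρ : Integrable A ρ := integrable_of_abs_le _ hA.aestronglyMeasurable hAbd
  have hiHρ : Integrable H ρ := integrable_of_abs_le _ hH.aestronglyMeasurable hHbd
  have hsplit : ∫ θ, F θ ∂ρ = (∫ θ, A θ ∂ρ) + u * ∫ θ, H θ ∂ρ := by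
    rw [hFdef]; rw [integral_add hiAρ (hiHρ.const_mul u), integral_const_mul]
  rw [← hFtrans, hsplit] at hineq
  rw [hKL]
  set K := ∫ θ, r θ * log (r θ) ∂pr
  set S := (∫ θ, A θ ∂ρ) + u * ∫ θ, H θ ∂ρ with hSdef
  have h2 := mul_le_mul_of_nonneg_left hineq (le_of_lt (by positivity : (0:ℝ) < 1/lam))
  have h3 : (1/lam) * (K + lam * S + log Z) = (1/lam) * K + S + (1/lam) * log Z := by
    field_simp
  rw [mul_zero, h3] at h2
  linarith

lemma gibbs_min (ub : ℝ) (hub : 0 ≤ ub) (B : ℝ)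
    (hslack : ub = 0 ∨ LambdaFn pr lam A H ub = B)
    (ρ : Measure Θ) (hρ : IsProbabilityMeasure ρ) (hac : ρ ≪ pr)
    (hint : Integrable (fun θ => log ((ρ.rnDeriv pr θ).toReal)) ρ)
    (hHB : (∫ θ, H θ ∂ρ) ≤ B) :
    (∫ θ, A θ ∂(gibbsMeasure pr lam A H ub))
        + (1 / lam) * klDiv (gibbsMeasure pr lam A H ub) pr
      ≤ (∫ θ, A θ ∂ρ) + (1 / lam) * klDiv ρ pr := by
  have h1 := gibbs_objective hlam hA hH hAbd hHbd (pr := pr) ub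
  have h2 := variational_lower_bound hlam hA hH hAbd hHbd ub ρ hρ hac hint
  have h3 : ub * (∫ θ, H θ ∂ρ) ≤ ub * LambdaFn pr lam A H ub := by
    rcases hslack with h|h
    · simp [h]
    · rw [h]; exact mul_le_mul_of_nonneg_left hHB hub
  linarith

end variational

section deriv

variable {pr : Measure Θ} [IsProbabilityMeasure pr]
variable (hlam : 0 < lam) (hA : Measurable A) (hH : Measurable H)
  (hAbd : ∀ θ, |A θ| ≤ CA) (hHbd : ∀ θ, |H θ| ≤ CH)

include hlam hA hH hAbd hHbd

lemma hasDerivAt_integral_gf (hCH : 0 ≤ CH) {φ : Θ → ℝ} (hφ : Measurable φ) {Cφ : ℝ}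
    (hCφ : 0 ≤ Cφ) (hφb : ∀ θ, |φ θ| ≤ Cφ) (u₀ : ℝ) :
    HasDerivAt (fun u => ∫ θ, exp (gf lam A H u θ) * φ θ ∂pr)
      (∫ θ, exp (gf lam A H u₀ θ) * -(lam * H θ) * φ θ ∂pr) u₀ := by
  set E : ℝ := exp (lam * (CA + (|u₀| + 1) * CH)) with hEdef
  have hxb : ∀ x ∈ Metric.ball u₀ (1:ℝ), ∀ θ, exp (gf lam A H x θ) ≤ E := by
    intro x hx θ
    have hd : |x - u₀| < 1 := by rwa [Metric.mem_ball, Real.dist_eq] at hx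
    have h1 : |x| ≤ |u₀| + 1 := by
      have h2 : |x| ≤ |x - u₀| + |u₀| := by
        calc |x| = |(x - u₀) + u₀| := by ring_nf
          _ ≤ |x - u₀| + |u₀| := abs_add_le _ _
      linarith
    refine exp_le_exp.mpr (le_trans (le_abs_self _)
      ((gf_abs_le hlam hAbd hHbd x θ).trans ?_))
    have h5 : |x| * CH ≤ (|u₀| + 1) * CH := mul_le_mul_of_nonneg_right h1 hCH
    exact mul_le_mul_of_nonneg_left (add_le_add le_rfl h5) hlam.le
  have key := hasDerivAt_integral_of_dominated_loc_of_deriv_le (μ := pr)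
    (F := fun u θ => exp (gf lam A H u θ) * φ θ)
    (F' := fun u θ => exp (gf lam A H u θ) * -(lam * H θ) * φ θ)
    (x₀ := u₀) (bound := fun _ => E * (lam * CH) * Cφ) (s := Metric.ball u₀ 1) (Metric.ball_mem_nhds u₀ one_pos)
    (Filter.Eventually.of_forall fun x =>
      ((measurable_exp.comp (gf_meas hA hH x)).mul hφ).aestronglyMeasurable)
    (integrable_exp_gf_mul hlam hA hH hAbd hHbd pr u₀ hφ hφb)
    (((measurable_exp.comp (gf_meas hA hH u₀)).mul
        ((hH.const_mul lam).neg)).mul hφ).aestronglyMeasurable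
    (Filter.Eventually.of_forall fun θ => fun x hx => ?_)
    (integrable_const _)
    (Filter.Eventually.of_forall fun θ => fun x _hx => ?_)
  · exact key.2
  · -- bound
    rw [Real.norm_eq_abs, abs_mul, abs_mul, abs_exp, abs_neg, abs_mul, abs_of_pos hlam]
    have h1 := hxb x hx θ
    have h2 := hHbd θ
    have h3 := hφb θ
    have h4 : (0:ℝ) < E := exp_pos _
    have a1 : lam * |H θ| ≤ lam * CH := mul_le_mul_of_nonneg_left h2 hlam.le
    exact mul_le_mul (mul_le_mul h1 a1 (by positivity) h4.le) h3 (abs_nonneg _)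
      (by positivity)
  · -- derivative
    have h0 : HasDerivAt (fun u : ℝ => gf lam A H u θ) (-(lam * H θ)) x := by
      have h1 : HasDerivAt (fun u : ℝ => u * H θ) (H θ) x := hasDerivAt_mul_const _
      have h2 := ((h1.const_add (A θ)).const_mul lam).neg
      simpa [gf, Pi.neg_def] using h2
    exact (h0.exp).mul_const (φ θ)

lemma hasDerivAt_Z (hCH : 0 ≤ CH) (u₀ : ℝ) :
    HasDerivAt (fun u => ∫ θ, exp (gf lam A H u θ) ∂pr)
      (-(lam * ∫ θ, exp (gf lam A H u₀ θ) * H θ ∂pr)) u₀ := by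
  have h := hasDerivAt_integral_gf (pr := pr) hlam hA hH hAbd hHbd hCH
    (φ := fun _ => (1:ℝ)) measurable_const (Cφ := 1) one_pos.le (fun _ => by norm_num) u₀
  have h1 : ∫ θ, exp (gf lam A H u₀ θ) * -(lam * H θ) * 1 ∂pr
      = -(lam * ∫ θ, exp (gf lam A H u₀ θ) * H θ ∂pr) := by
    rw [← integral_const_mul, ← integral_neg]
    congr 1; funext θ; ring
  rw [h1] at h
  simpa only [mul_one] using h

lemma hasDerivAt_N (hCH : 0 ≤ CH) (u₀ : ℝ) :
    HasDerivAt (fun u => ∫ θ, exp (gf lam A H u θ) * H θ ∂pr)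
      (-(lam * ∫ θ, exp (gf lam A H u₀ θ) * (H θ * H θ) ∂pr)) u₀ := by
  have h := hasDerivAt_integral_gf (pr := pr) hlam hA hH hAbd hHbd hCH
    (φ := H) hH (Cφ := CH) hCH hHbd u₀
  have h1 : ∫ θ, exp (gf lam A H u₀ θ) * -(lam * H θ) * H θ ∂pr
      = -(lam * ∫ θ, exp (gf lam A H u₀ θ) * (H θ * H θ) ∂pr) := by
    rw [← integral_const_mul, ← integral_neg]
    congr 1; funext θ; ring
  rw [h1] at h
  exact h

lemma hasDerivAt_Lambda (hCH : 0 ≤ CH) (u₀ : ℝ) :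
    HasDerivAt (LambdaFn pr lam A H)
      (-(lam * ∫ θ, (H θ - LambdaFn pr lam A H u₀)^2 ∂(gibbsMeasure pr lam A H u₀)))
      u₀ := by
  have hZ0 : 0 < ∫ θ, exp (gf lam A H u₀ θ) ∂pr := Z_pos hlam hA hH hAbd hHbd u₀
  have hdiv := (hasDerivAt_N (pr := pr) hlam hA hH hAbd hHbd hCH u₀).div
    (hasDerivAt_Z hlam hA hH hAbd hHbd hCH u₀) hZ0.ne'
  have hfun : (fun u => (∫ θ, exp (gf lam A H u θ) * H θ ∂pr)
      / ∫ θ, exp (gf lam A H u θ) ∂pr) = LambdaFn pr lam A H :=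
    funext fun u => (LambdaFn_eq hlam hA hH hAbd hHbd u).symm
  simp only [Pi.div_def] at hdiv
  rw [hfun] at hdiv
  refine hdiv.congr_deriv ?_
  -- value computation
  set Z0 : ℝ := ∫ θ, exp (gf lam A H u₀ θ) ∂pr with hZ0def
  set N0 : ℝ := ∫ θ, exp (gf lam A H u₀ θ) * H θ ∂pr with hN0def
  set M0 : ℝ := ∫ θ, exp (gf lam A H u₀ θ) * (H θ * H θ) ∂pr with hM0def
  set c : ℝ := LambdaFn pr lam A H u₀ with hcdef
  have hc : c = N0 / Z0 := LambdaFn_eq hlam hA hH hAbd hHbd u₀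
  have hiZ := integrable_exp_gf hlam hA hH hAbd hHbd pr u₀
  have hiN := integrable_exp_gf_mul hlam hA hH hAbd hHbd pr u₀ hH hHbd
  have hiM := integrable_exp_gf_mul hlam hA hH hAbd hHbd pr u₀ (φ := fun θ => H θ * H θ) (hH.mul hH)
    (Cφ := CH * CH) (fun θ => by
      rw [abs_mul]
      exact mul_le_mul (hHbd θ) (hHbd θ) (abs_nonneg _) hCH)
  have hV : ∫ θ, (H θ - c)^2 ∂(gibbsMeasure pr lam A H u₀)
      = (M0 - 2*c*N0 + c^2*Z0) / Z0 := by
    rw [integral_gibbs hlam hA hH hAbd hHbd u₀ (fun θ => (H θ - c)^2)]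
    congr 1
    have e1 : (fun θ => exp (gf lam A H u₀ θ) * (H θ - c)^2)
        = fun θ => exp (gf lam A H u₀ θ) * (H θ * H θ)
            - 2*c*(exp (gf lam A H u₀ θ) * H θ) + c^2 * exp (gf lam A H u₀ θ) := by
      funext θ; ring
    have i1 : Integrable (fun θ => exp (gf lam A H u₀ θ) * (H θ * H θ)
        - 2*c*(exp (gf lam A H u₀ θ) * H θ)) pr := hiM.sub (hiN.const_mul (2*c))
    rw [e1, integral_add i1 (hiZ.const_mul (c^2)), integral_sub hiM (hiN.const_mul (2*c)),
      integral_const_mul, integral_const_mul]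
  rw [hV, hc]
  field_simp
  ring

lemma continuous_Lambda (hCH : 0 ≤ CH) : Continuous (LambdaFn pr lam A H) :=
  continuous_iff_continuousAt.mpr fun u =>
    (hasDerivAt_Lambda hlam hA hH hAbd hHbd hCH u).differentiableAt.continuousAt

lemma strictAnti_Lambda (hCH : 0 ≤ CH)
    (hne : ∀ c : ℝ, ¬ (H =ᵐ[pr] fun _ => c)) :
    StrictAnti (LambdaFn pr lam A H) := by
  apply strictAnti_of_deriv_neg
  intro u
  rw [(hasDerivAt_Lambda hlam hA hH hAbd hHbd hCH u).deriv]
  set c : ℝ := LambdaFn pr lam A H u with hcdef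
  have hprob := gibbs_prob hlam hA hH hAbd hHbd (pr := pr) u
  have hiV : Integrable (fun θ => (H θ - c)^2) (gibbsMeasure pr lam A H u) := by
    refine integrable_of_abs_le _ ((hH.sub_const c).pow_const 2).aestronglyMeasurable
      (C := (CH + |c|)^2) fun θ => ?_
    have h1 : |H θ - c| ≤ CH + |c| := by
      calc |H θ - c| ≤ |H θ| + |c| := abs_sub _ _
        _ ≤ CH + |c| := add_le_add (hHbd θ) le_rfl
    rw [abs_of_nonneg (sq_nonneg _), ← sq_abs]
    exact pow_le_pow_left₀ (abs_nonneg _) h1 2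
  have hVnn : 0 ≤ ∫ θ, (H θ - c)^2 ∂(gibbsMeasure pr lam A H u) :=
    integral_nonneg fun θ => sq_nonneg _
  have hVne : ∫ θ, (H θ - c)^2 ∂(gibbsMeasure pr lam A H u) ≠ 0 := by
    intro h0
    have hae := (integral_eq_zero_iff_of_nonneg (fun θ => sq_nonneg _) hiV).mp h0
    have hacpr : pr ≪ gibbsMeasure pr lam A H u :=
      absolutelyContinuous_tilted (integrable_exp_gf hlam hA hH hAbd hHbd pr u)
    have hae2 := hacpr.ae_le hae
    refine hne c ?_
    filter_upwards [hae2] with θ hθ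
    have hθ' : (H θ - c)^2 = 0 := by simpa using hθ
    have h2 : H θ - c = 0 := sq_eq_zero_iff.mp hθ'
    show H θ = c
    linarith
  have hVpos : 0 < ∫ θ, (H θ - c)^2 ∂(gibbsMeasure pr lam A H u) :=
    lt_of_le_of_ne hVnn (Ne.symm hVne)
  exact neg_lt_zero.mpr (mul_pos hlam hVpos)

end deriv

section tail

variable {pr : Measure Θ} [IsProbabilityMeasure pr]
variable (hlam : 0 < lam) (hA : Measurable A) (hH : Measurable H)
  (hAbd : ∀ θ, |A θ| ≤ CA) (hHbd : ∀ θ, |H θ| ≤ CH)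

lemma exists_eps {B : ℝ} (hqual : 0 < pr {θ | H θ < B}) :
    ∃ ε : ℝ, 0 < ε ∧ 0 < pr {θ | H θ ≤ B - ε} := by
  by_contra h
  push_neg at h
  have h0 : ∀ n : ℕ, pr {θ | H θ ≤ B - 1/(n+1)} = 0 := fun n =>
    le_antisymm (h _ (by positivity)) zero_le
  have hsub : {θ | H θ < B} ⊆ ⋃ n : ℕ, {θ | H θ ≤ B - 1/(n+1)} := by
    intro θ hθ
    have hθ' : H θ < B := hθ
    obtain ⟨n, hn⟩ := exists_nat_one_div_lt (sub_pos.mpr hθ')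
    exact Set.mem_iUnion.mpr ⟨n, by simp only [Set.mem_setOf_eq]; push_cast at hn ⊢; linarith⟩
  have := measure_mono_null hsub (measure_iUnion_null h0)
  rw [this] at hqual
  exact lt_irrefl _ hqual

include hlam hA hH hAbd hHbd in
lemma Lambda_exists_lt (hCH : 0 ≤ CH) {B : ℝ} (hqual : 0 < pr {θ | H θ < B}) :
    ∃ u₁ : ℝ, 0 ≤ u₁ ∧ LambdaFn pr lam A H u₁ < B := by
  obtain ⟨ε, hε, hS⟩ := exists_eps (pr := pr) hqual
  set S : Set Θ := {θ | H θ ≤ B - ε} with hSdef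
  have hSmeas : MeasurableSet S := hH measurableSet_Iic
  set δ : ℝ := (pr S).toReal with hδdef
  have hδ : 0 < δ := ENNReal.toReal_pos hS.ne' (measure_ne_top _ _)
  set c : ℝ := B - ε/2 with hcdef
  set K : ℝ := (CH + |c|) / δ * exp (2*(lam*CA)) with hKdef
  have hbound : ∀ u : ℝ, 0 ≤ u →
      LambdaFn pr lam A H u ≤ c + K * exp (-(lam*(ε/2))*u) := by
    intro u hu
    have hZ : 0 < ∫ θ, exp (gf lam A H u θ) ∂pr := Z_pos hlam hA hH hAbd hHbd u
    have hiZ := integrable_exp_gf hlam hA hH hAbd hHbd pr u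
    have hiNum : Integrable (fun θ => exp (gf lam A H u θ) * (H θ - c)) pr :=
      integrable_exp_gf_mul hlam hA hH hAbd hHbd pr u (hH.sub_const c)
        (Cφ := CH + |c|) (fun θ => by
          calc |H θ - c| ≤ |H θ| + |c| := abs_sub _ _
            _ ≤ CH + |c| := add_le_add (hHbd θ) le_rfl)
    -- numerator upper bound
    have hnum : ∫ θ, exp (gf lam A H u θ) * (H θ - c) ∂pr
        ≤ exp (lam*CA - lam*u*c) * (CH + |c|) := by
      have hpt : ∀ θ, exp (gf lam A H u θ) * (H θ - c)
          ≤ exp (lam*CA - lam*u*c) * (CH + |c|) := by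
        intro θ
        rcases le_or_gt (H θ) c with h|h
        · have h1 : exp (gf lam A H u θ) * (H θ - c) ≤ 0 :=
            mul_nonpos_of_nonneg_of_nonpos (exp_pos _).le (sub_nonpos.mpr h)
          have h2 : (0:ℝ) ≤ exp (lam*CA - lam*u*c) * (CH + |c|) := by positivity
          linarith
        · have t1 : 0 ≤ lam * u * (H θ - c) :=
            mul_nonneg (mul_nonneg hlam.le hu) (by linarith)
          have t2 := abs_le.mp (hAbd θ)
          have e1 : gf lam A H u θ ≤ lam*CA - lam*u*c := by
            unfold gf; nlinarith
          have e2 : H θ - c ≤ CH + |c| := by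
            have := hHbd θ
            have := le_abs_self (H θ)
            have := neg_abs_le c
            linarith [abs_le.mp (hHbd θ)]
          exact mul_le_mul (exp_le_exp.mpr e1) e2 (by linarith) (exp_pos _).le
      calc ∫ θ, exp (gf lam A H u θ) * (H θ - c) ∂pr
          ≤ ∫ _θ, exp (lam*CA - lam*u*c) * (CH + |c|) ∂pr :=
            integral_mono hiNum (integrable_const _) hpt
        _ = exp (lam*CA - lam*u*c) * (CH + |c|) := by
            rw [integral_const]; simp [measure_univ]
    -- denominator lower bound
    have hden : exp (-(lam*CA) - lam*u*(B-ε)) * δ ≤ ∫ θ, exp (gf lam A H u θ) ∂pr := by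
      have hpt : ∀ θ, S.indicator (fun _ => exp (-(lam*CA) - lam*u*(B-ε))) θ
          ≤ exp (gf lam A H u θ) := by
        intro θ
        rw [Set.indicator_apply]
        split_ifs with hmem
        · have hHθ : H θ ≤ B - ε := hmem
          have t2 := abs_le.mp (hAbd θ)
          have t1 : 0 ≤ lam * u * ((B - ε) - H θ) :=
            mul_nonneg (mul_nonneg hlam.le hu) (by linarith)
          refine exp_le_exp.mpr ?_
          unfold gf; nlinarith
        · exact (exp_pos _).le
      have hind : ∫ θ, S.indicator (fun _ => exp (-(lam*CA) - lam*u*(B-ε))) θ ∂pr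
          = exp (-(lam*CA) - lam*u*(B-ε)) * δ := by
        rw [integral_indicator_const _ hSmeas]
        simp [hδdef, mul_comm, measureReal_def]
      rw [← hind]
      exact integral_mono ((integrable_const _).indicator hSmeas) hiZ hpt
    -- combine
    have hΛ : LambdaFn pr lam A H u - c
        = (∫ θ, exp (gf lam A H u θ) * (H θ - c) ∂pr) / ∫ θ, exp (gf lam A H u θ) ∂pr := by
      rw [LambdaFn_eq hlam hA hH hAbd hHbd u]
      have e1 : (fun θ => exp (gf lam A H u θ) * (H θ - c))
          = fun θ => exp (gf lam A H u θ) * H θ - c * exp (gf lam A H u θ) := by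
        funext θ; ring
      rw [e1, integral_sub (integrable_exp_gf_mul hlam hA hH hAbd hHbd pr u hH hHbd)
        (hiZ.const_mul c), integral_const_mul]
      field_simp
    have hdenpos : (0:ℝ) < exp (-(lam*CA) - lam*u*(B-ε)) * δ := by positivity
    have hfrac : (∫ θ, exp (gf lam A H u θ) * (H θ - c) ∂pr) / ∫ θ, exp (gf lam A H u θ) ∂pr
        ≤ (exp (lam*CA - lam*u*c) * (CH + |c|)) / (exp (-(lam*CA) - lam*u*(B-ε)) * δ) := by
      have step1 : (∫ θ, exp (gf lam A H u θ) * (H θ - c) ∂pr) / ∫ θ, exp (gf lam A H u θ) ∂pr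
          ≤ (exp (lam*CA - lam*u*c) * (CH + |c|)) / ∫ θ, exp (gf lam A H u θ) ∂pr :=
        (div_le_div_iff_of_pos_right hZ).mpr hnum
      refine step1.trans ?_
      exact div_le_div_of_nonneg_left (by positivity) hdenpos hden
    have hKe : (exp (lam*CA - lam*u*c) * (CH + |c|)) / (exp (-(lam*CA) - lam*u*(B-ε)) * δ)
        = K * exp (-(lam*(ε/2))*u) := by
      have e3 : exp (lam*CA - lam*u*c)
          = exp (2*(lam*CA)) * exp (-(lam*(ε/2))*u) * exp (-(lam*CA) - lam*u*(B-ε)) := by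
        rw [← exp_add, ← exp_add]
        congr 1
        rw [hcdef]; ring
      rw [hKdef, e3]
      field_simp
    linarith [hΛ ▸ (hfrac.trans_eq hKe)]
  -- now take the limit
  have hcB : c < B := by rw [hcdef]; linarith
  have htend : Filter.Tendsto (fun u : ℝ => c + K * exp (-(lam*(ε/2))*u))
      Filter.atTop (nhds c) := by
    have h1 : Filter.Tendsto (fun u : ℝ => -(lam*(ε/2))*u) Filter.atTop Filter.atBot := by
      rw [show (fun u : ℝ => -(lam*(ε/2))*u) = fun u : ℝ => -(lam*(ε/2)) * id u from rfl]
      exact (Filter.tendsto_const_mul_atBot_of_neg (by nlinarith)).mpr Filter.tendsto_id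
    have h2 : Filter.Tendsto (fun u : ℝ => K * exp (-(lam*(ε/2))*u)) Filter.atTop (nhds 0) := by
      have := (Real.tendsto_exp_atBot.comp h1).const_mul K
      simpa using this
    have := h2.const_add c
    simpa using this
  have hev : ∀ᶠ u in Filter.atTop, c + K * exp (-(lam*(ε/2))*u) < B :=
    htend.eventually_lt_const hcB
  obtain ⟨u₁, hu₁B, hu₁0⟩ := (hev.and (Filter.eventually_ge_atTop (0:ℝ))).exists
  exact ⟨u₁, hu₁0, lt_of_le_of_lt (hbound u₁ hu₁0) hu₁B⟩

end tail

end Stmt4Helper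

open Stmt4Helper in
/-- If `prior {H < B} > 0`, there is a unique `ū ≥ 0` such that `ρ̃_ū` minimizes
`∫ A dρ + (1/lam) KL(ρ‖prior)` over probability measures `ρ ≪ prior` with `∫ H dρ ≤ B`;
moreover `ū = 0` if `Λ(0) ≤ B`, and otherwise `ū > 0` is the unique positive solution of
`Λ(ū) = B`. -/
theorem stmt4 {Θ : Type*} [MeasurableSpace Θ] (prior : Measure Θ)
    [IsProbabilityMeasure prior]
    (lam : ℝ) (hlam : 0 < lam)
    (A H : Θ → ℝ) (hA : Measurable A) (hH : Measurable H)
    (CA CH : ℝ) (hAbd : ∀ θ, |A θ| ≤ CA) (hHbd : ∀ θ, |H θ| ≤ CH)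
    (B : ℝ) (hqual : 0 < prior {θ | H θ < B}) :
    ∃ ubar : ℝ, 0 ≤ ubar ∧
      LambdaFn prior lam A H ubar ≤ B ∧
      (∀ ρ : Measure Θ, IsProbabilityMeasure ρ → ρ ≪ prior →
        Integrable (fun θ => Real.log ((ρ.rnDeriv prior θ).toReal)) ρ →
        (∫ θ, H θ ∂ρ) ≤ B →
        (∫ θ, A θ ∂(gibbsMeasure prior lam A H ubar))
            + (1 / lam) * klDiv (gibbsMeasure prior lam A H ubar) prior
          ≤ (∫ θ, A θ ∂ρ) + (1 / lam) * klDiv ρ prior) ∧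
      (LambdaFn prior lam A H 0 ≤ B → ubar = 0) ∧
      (B < LambdaFn prior lam A H 0 →
        0 < ubar ∧ LambdaFn prior lam A H ubar = B ∧
          ∀ u : ℝ, 0 < u → LambdaFn prior lam A H u = B → u = ubar) := by
  classical
  have hneΘ : Nonempty Θ := by
    by_contra h
    have h1 : (Set.univ : Set Θ) = ∅ := Set.univ_eq_empty_iff.mpr (not_nonempty_iff.mp h)
    have h2 := measure_univ (μ := prior)
    rw [h1, measure_empty] at h2
    exact zero_ne_one h2
  obtain ⟨θ0⟩ := hneΘ
  have hCH : 0 ≤ CH := (abs_nonneg _).trans (hHbd θ0)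
  by_cases hle : LambdaFn prior lam A H 0 ≤ B
  · refine ⟨0, le_rfl, hle, ?_, fun _ => rfl, fun h => absurd h (not_lt.mpr hle)⟩
    intro ρ hρ hac hint hHB
    exact gibbs_min hlam hA hH hAbd hHbd 0 le_rfl B (Or.inl rfl) ρ hρ hac hint hHB
  · push_neg at hle
    have hnc : ∀ c : ℝ, ¬ (H =ᵐ[prior] fun _ => c) := by
      intro c hc
      have hprob := gibbs_prob hlam hA hH hAbd hHbd (pr := prior) 0
      have h1 : LambdaFn prior lam A H 0 = c := by
        have hae : H =ᵐ[gibbsMeasure prior lam A H 0] fun _ => c :=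
          (tilted_absolutelyContinuous prior _).ae_le hc
        have : LambdaFn prior lam A H 0 = ∫ θ, H θ ∂(gibbsMeasure prior lam A H 0) := rfl
        rw [this, integral_congr_ae hae, integral_const]
        simp [hprob.measure_univ]
      have h2 : c < B := by
        by_contra h
        push_neg at h
        have hz : prior {θ | H θ < B} = 0 := by
          rw [measure_eq_zero_iff_ae_notMem]
          filter_upwards [hc] with θ hθ
          simp only [Set.mem_setOf_eq, not_lt]
          have hθ' : H θ = c := hθ
          rw [hθ']
          exact h
        rw [hz] at hqual
        exact lt_irrefl _ hqual
      linarith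
    have hanti := strictAnti_Lambda hlam hA hH hAbd hHbd hCH hnc
    obtain ⟨u₁, hu₁0, hΛu₁⟩ := Lambda_exists_lt hlam hA hH hAbd hHbd hCH hqual
    have hcont : ContinuousOn (LambdaFn prior lam A H) (Set.Icc 0 u₁) :=
      (continuous_Lambda hlam hA hH hAbd hHbd hCH).continuousOn
    have hmem : B ∈ Set.Icc (LambdaFn prior lam A H u₁) (LambdaFn prior lam A H 0) :=
      ⟨hΛu₁.le, hle.le⟩
    obtain ⟨ub, hubmem, hub⟩ := intermediate_value_Icc' hu₁0 hcont hmem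
    have hub0 : 0 < ub := by
      rcases eq_or_lt_of_le hubmem.1 with h|h
      · exfalso
        rw [← h] at hub
        linarith
      · exact h
    refine ⟨ub, hub0.le, le_of_eq hub, ?_, ?_, ?_⟩
    · intro ρ hρ hac hint hHB
      exact gibbs_min hlam hA hH hAbd hHbd ub hub0.le B (Or.inr hub) ρ hρ hac hint hHB
    · intro h; linarith
    · intro _
      exact ⟨hub0, hub, fun u _hu hΛu => hanti.injective (hΛu.trans hub.symm)⟩
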